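/- Fix the dihedral group W = I₂(m), m ≥ 3. When the product X_{α…}^{(m)} is expanded in the Q-basis {δ_w : w ∈ W} of Q_W, the coefficient of δ_{β…}^{(m−3)} equals −y_α · υ_β^{(3)} · { S_β^{(0,m−3)}(y_α y_β) + s_α(y_α y_β) } if m is even, and y_α · υ_β^{(3)} · { S_β^{(0,m−3)}(y_α y_β) + s_α(y_α y_β) } if m is odd. By symmetry (exchanging the roles of α and β), the coefficient of δ_{α…}^{(m−3)} in the expansion of X_{β…}^{(m)} is the corresponding expression with α and β interchanged. -/

import Mathlib

open Finset DihedralGroup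

/-- The alternating product `a * b * a * ⋯` with `n` factors, starting with `a`. -/
def altWord {M : Type*} [Monoid M] (a b : M) : ℕ → M
  | 0 => 1
  | n + 1 => a * altWord b a n

lemma altWord_zero {M : Type*} [Monoid M] (a b : M) : altWord a b 0 = 1 := rfl

lemma altWord_succ {M : Type*} [Monoid M] (a b : M) (n : ℕ) :
    altWord a b (n + 1) = a * altWord b a n := rfl

lemma altWord_map {M N : Type*} [Monoid M] [Monoid N] (f : M →* N) :
    ∀ (n : ℕ) (a b : M), altWord (f a) (f b) n = f (altWord a b n) := by
  intro n
  induction n with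
  | zero => intro a b; simp [altWord_zero]
  | succ n ih => intro a b; rw [altWord_succ, altWord_succ, ih, map_mul]

lemma sa_mul_altWord {M : Type*} [Monoid M] {sa sb : M} (hsa : sa * sa = 1) (j : ℕ) :
    sa * altWord sa sb (j + 1) = altWord sb sa j := by
  rw [altWord_succ, ← mul_assoc, hsa, one_mul]

section Generic

variable {Q A W : Type*} [CommRing Q] [Ring A] [Group W] [Fintype W] [DecidableEq W]

lemma mulStep (φ : W →* RingAut Q) (ι : Q →+* A) (δ : W →* A)
    (hcomm : ∀ (w : W) (q : Q), δ w * ι q = ι (φ w q) * δ w)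
    (s : W) (hs : s * s = 1) (q : Q) (g : W → Q) :
    (ι q * (1 - δ s)) * (∑ w : W, ι (g w) * δ w) =
      ∑ w : W, ι (q * (g w - φ s (g (s * w)))) * δ w := by
  have hss : ∀ x : W, s * (s * x) = x := by
    intro x; rw [← mul_assoc, hs, one_mul]
  calc (ι q * (1 - δ s)) * (∑ w : W, ι (g w) * δ w)
      = ∑ w : W, (ι (q * g w) * δ w - ι (q * φ s (g w)) * δ (s * w)) := by
        rw [Finset.mul_sum]
        refine Finset.sum_congr rfl fun w _ => ?_
        rw [mul_sub, mul_one, sub_mul]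
        congr 1
        · rw [← mul_assoc, ← map_mul]
        · rw [mul_assoc (ι q), ← mul_assoc (δ s), hcomm, mul_assoc, ← map_mul δ,
            ← mul_assoc, ← map_mul ι]
    _ = (∑ w : W, ι (q * g w) * δ w) - ∑ w : W, ι (q * φ s (g w)) * δ (s * w) := by
        rw [Finset.sum_sub_distrib]
    _ = (∑ w : W, ι (q * g w) * δ w) - ∑ w : W, ι (q * φ s (g (s * w))) * δ w := by
        congr 1
        exact Fintype.sum_equiv (Equiv.mulLeft s)
          (fun w => ι (q * φ s (g w)) * δ (s * w))
          (fun w => ι (q * φ s (g (s * w))) * δ w)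
          (fun x => by simp only [Equiv.coe_mulLeft, hss])
    _ = ∑ w : W, ι (q * (g w - φ s (g (s * w)))) * δ w := by
        rw [← Finset.sum_sub_distrib]
        refine Finset.sum_congr rfl fun w _ => ?_
        rw [mul_sub, map_sub, sub_mul]

end Generic
/-- Twisted product of the `y`'s along the alternating word. -/
def Ud {Q W : Type*} [CommRing Q] [Monoid W] (φ : W →* RingAut Q)
    (sa sb : W) (ya yb : Q) (t : ℕ) : Q :=
  ∏ j ∈ Finset.range t, φ (altWord sa sb j) (if Even j then ya else yb)

/-- Twisted sum of `c` along the alternating word. -/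
def Sd {Q W : Type*} [CommRing Q] [Monoid W] (φ : W →* RingAut Q)
    (sa sb : W) (c : Q) (t : ℕ) : Q :=
  ∑ k ∈ Finset.range (t + 1), φ (altWord sa sb k) c

lemma RingAut_mul_apply {R : Type*} [Semiring R] (f g : RingAut R) (x : R) :
    (f * g) x = f (g x) := rfl

lemma RingAut_one_apply {R : Type*} [Semiring R] (x : R) : (1 : RingAut R) x = x := rfl

section UdSd

variable {Q W : Type*} [CommRing Q] [Monoid W] (φ : W →* RingAut Q) (sa sb : W) (ya yb c : Q)

lemma ite_even_succ (j : ℕ) : (if Even (j + 1) then ya else yb) = (if Even j then yb else ya) := by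
  by_cases h : Even j <;> simp [Nat.even_add_one, h]

lemma Ud_zero : Ud φ sa sb ya yb 0 = 1 := by simp [Ud]

lemma Ud_succ (t : ℕ) :
    Ud φ sa sb ya yb (t + 1) = ya * φ sa (Ud φ sb sa yb ya t) := by
  unfold Ud
  rw [Finset.prod_range_succ']
  have h0 : φ (altWord sa sb 0) (if Even 0 then ya else yb) = ya := by
    simp [altWord, RingAut_one_apply]
  rw [h0, map_prod, mul_comm]
  congr 1
  refine Finset.prod_congr rfl fun j _ => ?_
  rw [ite_even_succ ya yb j]
  show φ (altWord sa sb (j + 1)) _ = _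
  have : altWord sa sb (j + 1) = sa * altWord sb sa j := rfl
  rw [this, map_mul]
  rfl

lemma Ud_apply (hsa : sa * sa = 1) (t : ℕ) :
    φ sa (Ud φ sa sb ya yb (t + 1)) = φ sa ya * Ud φ sb sa yb ya t := by
  rw [Ud_succ, map_mul, ← RingAut_mul_apply, ← map_mul, hsa, map_one, RingAut_one_apply]

lemma Sd_zero : Sd φ sa sb c 0 = c := by simp [Sd, altWord, RingAut_one_apply]

lemma Sd_succ (t : ℕ) :
    Sd φ sa sb c (t + 1) = c + φ sa (Sd φ sb sa c t) := by
  unfold Sd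
  rw [Finset.sum_range_succ']
  have h0 : φ (altWord sa sb 0) c = c := by simp [altWord, RingAut_one_apply]
  rw [h0, map_sum, add_comm]
  congr 1
  refine Finset.sum_congr rfl fun j _ => ?_
  have : altWord sa sb (j + 1) = sa * altWord sb sa j := rfl
  rw [this, map_mul]
  rfl

lemma Ud_one : Ud φ sa sb ya yb 1 = ya := by
  rw [Ud_succ, Ud_zero, map_one]
  simp

lemma Ud_two : Ud φ sa sb ya yb 2 = ya * φ sa yb := by
  rw [Ud_succ, Ud_one]

lemma Sd_one : Sd φ sa sb c 1 = c + φ sa c := by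
  rw [Sd_succ, Sd_zero]

end UdSd
def stepFun {Q W : Type*} [CommRing Q] [Monoid W] (φ : W →* RingAut Q)
    (s : W) (y : Q) (g : W → Q) : W → Q :=
  fun w => y * (g w - φ s (g (s * w)))

lemma stepFun_apply {Q W : Type*} [CommRing Q] [Monoid W] (φ : W →* RingAut Q)
    (s : W) (y : Q) (g : W → Q) (w : W) :
    stepFun φ s y g w = y * (g w - φ s (g (s * w))) := rfl

def unitFun (W Q : Type*) [One W] [DecidableEq W] [Zero Q] [One Q] : W → Q :=
  fun w => if w = 1 then 1 else 0

lemma unitFun_one (W Q : Type*) [One W] [DecidableEq W] [Zero Q] [One Q] :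
    unitFun W Q 1 = 1 := if_pos rfl

lemma unitFun_ne (W Q : Type*) [One W] [DecidableEq W] [Zero Q] [One Q]
    {x : W} (h : x ≠ 1) : unitFun W Q x = 0 := if_neg h

lemma cancel_left {W : Type*} [Monoid W] {s x w : W} (hs : s * s = 1)
    (h : s * w = x) : w = s * x := by rw [← h, ← mul_assoc, hs, one_mul]

lemma base3 {Q A W : Type*} [CommRing Q] [Ring A] [Group W] [Fintype W] [DecidableEq W]
    (φ : W →* RingAut Q) (ι : Q →+* A) (δ : W →* A)
    (hcomm : ∀ (w : W) (q : Q), δ w * ι q = ι (φ w q) * δ w)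
    (sa sb : W) (hsa : sa * sa = 1) (hsb : sb * sb = 1)
    (m : ℕ) (hm : 3 ≤ m)
    (hdist : ∀ i j : ℕ, j < i → i ≤ m →
      (altWord sa sb i ≠ altWord sa sb j ∧ altWord sa sb i ≠ altWord sb sa j ∧
       altWord sb sa i ≠ altWord sa sb j ∧ altWord sb sa i ≠ altWord sb sa j))
    (ya yb : Q)
    (hx1 : altWord sb sa 4 ≠ 1) (hx3 : altWord sa sb 5 ≠ 1)
    (hx4 : altWord sb sa 5 ≠ 1) (hx5 : 3 < m → altWord sa sb 6 ≠ 1) :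
    ∃ f : W → Q,
      altWord (ι ya * (1 - δ sa)) (ι yb * (1 - δ sb)) 3 = (∑ w : W, ι (f w) * δ w) ∧
      (∀ w, (∀ j ≤ 3, w ≠ altWord sa sb j ∧ w ≠ altWord sb sa j) → f w = 0) ∧
      f (altWord sa sb 3) = (-1 : Q) ^ 3 * Ud φ sa sb ya yb 3 ∧
      (3 < m → f (altWord sb sa 3) = 0) ∧
      f (altWord sa sb 2) = -((-1 : Q) ^ 3 * Ud φ sa sb ya yb 3) ∧
      f (altWord sb sa 2) = -((-1 : Q) ^ 3 * (ya * Ud φ sb sa yb ya 2)) ∧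
      f (altWord sa sb 1) = (-1 : Q) ^ 3 * (Ud φ sa sb ya yb 1 * Sd φ sa sb (ya * yb) 1) ∧
      f (altWord sb sa 1) = (-1 : Q) ^ 3 * (ya * Ud φ sb sa yb ya 2) ∧
      f (altWord sa sb 0) = -((-1 : Q) ^ 3 * (Ud φ sa sb ya yb 1 * Sd φ sa sb (ya * yb) 1)) ∧
      f (altWord sb sa 0) = -((-1 : Q) ^ 3 * (ya * Ud φ sb sa yb ya 0 *
        (Sd φ sb sa (ya * yb) 0 + φ sa (ya * yb)))) := by
  have hA0 : altWord sa sb 0 = 1 := rfl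
  have hB0 : altWord sb sa 0 = 1 := rfl
  have hA1 : altWord sa sb 1 = sa := by rw [altWord_succ, hB0, mul_one]
  have hB1 : altWord sb sa 1 = sb := by rw [altWord_succ, hA0, mul_one]
  have habA : ∀ j, altWord sa sb (j + 1) = sa * altWord sb sa j := fun j => rfl
  have habB : ∀ j, altWord sb sa (j + 1) = sb * altWord sa sb j := fun j => rfl
  have hsaA : ∀ j, sa * altWord sa sb (j + 1) = altWord sb sa j := sa_mul_altWord hsa
  have hsbB : ∀ j, sb * altWord sb sa (j + 1) = altWord sa sb j := sa_mul_altWord hsb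
  -- small distinctness facts
  have hsane : sa ≠ 1 := by
    have := (hdist 1 0 (by omega) (by omega)).1; rwa [hA1, hA0] at this
  have hsbne : sb ≠ 1 := by
    have := (hdist 1 0 (by omega) (by omega)).2.2.2; rwa [hB1, hB0] at this
  have hA2ne1 : altWord sa sb 2 ≠ 1 := by
    have := (hdist 2 0 (by omega) (by omega)).1; rwa [hA0] at this
  have hB2ne1 : altWord sb sa 2 ≠ 1 := by
    have := (hdist 2 0 (by omega) (by omega)).2.2.2; rwa [hB0] at this
  have hA3ne1 : altWord sa sb 3 ≠ 1 := by
    have := (hdist 3 0 (by omega) (by omega)).1; rwa [hA0] at this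
  -- the coefficient functions
  obtain ⟨e, hedef⟩ : ∃ e : W → Q, e = unitFun W Q := ⟨_, rfl⟩
  obtain ⟨f1, hf1def⟩ : ∃ f : W → Q, f = stepFun φ sa ya e := ⟨_, rfl⟩
  obtain ⟨g2, hg2def⟩ : ∃ f : W → Q, f = stepFun φ sb yb f1 := ⟨_, rfl⟩
  obtain ⟨f3, hf3def⟩ : ∃ f : W → Q, f = stepFun φ sa ya g2 := ⟨_, rfl⟩
  -- level-1 values
  have F1one : f1 1 = ya := by
    rw [hf1def, stepFun_apply, hedef, mul_one, unitFun_one, unitFun_ne W Q (hA1 ▸ hsane)]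
    simp
  have F1A1 : f1 (altWord sa sb 1) = -ya := by
    rw [hf1def, stepFun_apply, hedef, hA1, hsa, unitFun_one, unitFun_ne W Q hsane]
    simp
  have F1B1 : f1 (altWord sb sa 1) = 0 := by
    have h2 : sa * altWord sb sa 1 = altWord sa sb 2 := (habA 1).symm
    rw [hf1def, stepFun_apply, hedef, h2, unitFun_ne W Q hA2ne1,
      unitFun_ne W Q (by rw [hB1]; exact hsbne)]
    simp
  have F1supp : ∀ w, (∀ j ≤ 1, w ≠ altWord sa sb j ∧ w ≠ altWord sb sa j) → f1 w = 0 := by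
    intro w hw
    have h1 : w ≠ 1 := by have := (hw 0 (by omega)).1; rwa [hA0] at this
    have h2 : sa * w ≠ 1 := by
      intro h
      exact (hw 1 (by omega)).1 (by rw [cancel_left hsa h, mul_one]; exact hA1.symm)
    rw [hf1def, stepFun_apply, hedef, unitFun_ne W Q h1, unitFun_ne W Q h2]
    simp
  have F1A2 : f1 (altWord sa sb 2) = 0 :=
    F1supp _ fun j hj => ⟨(hdist 2 j (by omega) (by omega)).1,
      (hdist 2 j (by omega) (by omega)).2.1⟩
  have F1A3 : f1 (altWord sa sb 3) = 0 :=
    F1supp _ fun j hj => ⟨(hdist 3 j (by omega) (by omega)).1,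
      (hdist 3 j (by omega) (by omega)).2.1⟩
  have F1B2 : f1 (altWord sb sa 2) = 0 :=
    F1supp _ fun j hj => ⟨(hdist 2 j (by omega) (by omega)).2.2.1,
      (hdist 2 j (by omega) (by omega)).2.2.2⟩
  have F1B3 : f1 (altWord sb sa 3) = 0 :=
    F1supp _ fun j hj => ⟨(hdist 3 j (by omega) (by omega)).2.2.1,
      (hdist 3 j (by omega) (by omega)).2.2.2⟩
  have F1B4 : f1 (altWord sb sa 4) = 0 := by
    have h2 : sa * altWord sb sa 4 = altWord sa sb 5 := (habA 4).symm
    rw [hf1def, stepFun_apply, hedef, h2, unitFun_ne W Q hx1, unitFun_ne W Q hx3]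
    simp
  have F1A4 : 3 < m → f1 (altWord sa sb 4) = 0 := fun h =>
    F1supp _ fun j hj => ⟨(hdist 4 j (by omega) (by omega)).1,
      (hdist 4 j (by omega) (by omega)).2.1⟩
  have F1B5 : 3 < m → f1 (altWord sb sa 5) = 0 := by
    intro h
    have h2 : sa * altWord sb sa 5 = altWord sa sb 6 := (habA 5).symm
    rw [hf1def, stepFun_apply, hedef, h2, unitFun_ne W Q hx4, unitFun_ne W Q (hx5 h)]
    simp
  -- level-2 values
  have hsb1 : sb * (1 : W) = altWord sb sa 1 := by rw [mul_one, hB1]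
  have G2one : g2 1 = yb * ya := by
    rw [hg2def, stepFun_apply, hsb1, F1one, F1B1]
    simp
  have G2A1 : g2 (altWord sa sb 1) = -(yb * ya) := by
    have h2 : sb * altWord sa sb 1 = altWord sb sa 2 := (habB 1).symm
    rw [hg2def, stepFun_apply, h2, F1A1, F1B2, map_zero]
    ring
  have G2B1 : g2 (altWord sb sa 1) = -(yb * φ sb ya) := by
    have h2 : sb * altWord sb sa 1 = (1 : W) := by rw [hB1, hsb]
    rw [hg2def, stepFun_apply, h2, F1B1, F1one]
    ring
  have G2A2 : g2 (altWord sa sb 2) = 0 := by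
    have h2 : sb * altWord sa sb 2 = altWord sb sa 3 := (habB 2).symm
    rw [hg2def, stepFun_apply, h2, F1A2, F1B3]
    simp
  have G2B2 : g2 (altWord sb sa 2) = yb * φ sb ya := by
    have h2 : sb * altWord sb sa 2 = altWord sa sb 1 := hsbB 1
    rw [hg2def, stepFun_apply, h2, F1B2, F1A1]
    simp
  have G2A3 : g2 (altWord sa sb 3) = 0 := by
    have h2 : sb * altWord sa sb 3 = altWord sb sa 4 := (habB 3).symm
    rw [hg2def, stepFun_apply, h2, F1A3, F1B4]
    simp
  have G2B3 : g2 (altWord sb sa 3) = 0 := by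
    have h2 : sb * altWord sb sa 3 = altWord sa sb 2 := hsbB 2
    rw [hg2def, stepFun_apply, h2, F1B3, F1A2]
    simp
  have G2A4 : 3 < m → g2 (altWord sa sb 4) = 0 := by
    intro h
    have h2 : sb * altWord sa sb 4 = altWord sb sa 5 := (habB 4).symm
    rw [hg2def, stepFun_apply, h2, F1A4 h, F1B5 h]
    simp
  have G2supp : ∀ w, (∀ j ≤ 2, w ≠ altWord sa sb j ∧ w ≠ altWord sb sa j) → g2 w = 0 := by
    intro w hw
    have h1 : f1 w = 0 := F1supp _ fun j hj => hw j (by omega)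
    have h2 : f1 (sb * w) = 0 := by
      refine F1supp _ fun j hj => ⟨?_, ?_⟩
      · intro h
        match j, hj with
        | 0, _ =>
          rw [hA0] at h
          exact (hw 1 (by omega)).2 (by rw [cancel_left hsb h, mul_one]; exact hB1.symm)
        | 1, _ =>
          exact (hw 2 (by omega)).2 (by rw [cancel_left hsb h, ← habB 1])
      · intro h
        match j, hj with
        | 0, _ =>
          rw [hB0] at h
          exact (hw 1 (by omega)).2 (by rw [cancel_left hsb h, mul_one]; exact hB1.symm)
        | 1, _ =>
          rw [hB1] at h
          exact (hw 0 (by omega)).1 (by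
            rw [cancel_left hsb h, hsb, hA0])
    rw [hg2def, stepFun_apply, h1, h2]
    simp
  -- level-3: the claims
  refine ⟨f3, ?_, ?_, ?_, ?_, ?_, ?_, ?_, ?_, ?_, ?_⟩
  · -- expansion
    have E0 : (1 : A) = ∑ w : W, ι (e w) * δ w := by
      symm
      rw [Fintype.sum_eq_single (1 : W) (fun w hw => by
        rw [hedef, unitFun_ne W Q hw, map_zero, zero_mul])]
      rw [hedef, unitFun_one, map_one, map_one, mul_one]
    have E1 : (ι ya * (1 - δ sa)) * (1 : A) = ∑ w : W, ι (f1 w) * δ w := by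
      rw [hf1def]
      nth_rewrite 2 [E0]
      exact mulStep φ ι δ hcomm sa hsa ya e
    have E2 : (ι yb * (1 - δ sb)) * ((ι ya * (1 - δ sa)) * (1 : A)) =
        ∑ w : W, ι (g2 w) * δ w := by
      rw [E1, hg2def]; exact mulStep φ ι δ hcomm sb hsb yb f1
    have E3 : (ι ya * (1 - δ sa)) * ((ι yb * (1 - δ sb)) * ((ι ya * (1 - δ sa)) * (1 : A))) =
        ∑ w : W, ι (f3 w) * δ w := by
      rw [E2, hf3def]; exact mulStep φ ι δ hcomm sa hsa ya g2
    calc altWord (ι ya * (1 - δ sa)) (ι yb * (1 - δ sb)) 3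
        = (ι ya * (1 - δ sa)) * ((ι yb * (1 - δ sb)) * ((ι ya * (1 - δ sa)) * (1 : A))) := rfl
      _ = ∑ w : W, ι (f3 w) * δ w := E3
  · -- support
    intro w hw
    have h1 : g2 w = 0 := G2supp _ fun j hj => hw j (by omega)
    have h2 : g2 (sa * w) = 0 := by
      refine G2supp _ fun j hj => ⟨?_, ?_⟩
      · intro h
        match j, hj with
        | 0, _ =>
          rw [hA0] at h
          exact (hw 1 (by omega)).1 (by rw [cancel_left hsa h, mul_one]; exact hA1.symm)
        | 1, _ =>
          exact (hw 0 (by omega)).2 (by rw [cancel_left hsa h, hsaA 0])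
        | 2, _ =>
          exact (hw 1 (by omega)).2 (by rw [cancel_left hsa h, hsaA 1])
      · intro h
        exact (hw (j + 1) (by omega)).1 (by rw [cancel_left hsa h, ← habA j])
    rw [hf3def, stepFun_apply, h1, h2]
    simp
  · -- f3 (A 3)
    have h2 : sa * altWord sa sb 3 = altWord sb sa 2 := hsaA 2
    rw [hf3def, stepFun_apply, h2, G2A3, G2B2,
      Ud_succ φ sa sb ya yb 2, Ud_two φ sb sa yb ya]
    ring
  · -- f3 (B 3), guarded
    intro h
    have h2 : sa * altWord sb sa 3 = altWord sa sb 4 := (habA 3).symm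
    rw [hf3def, stepFun_apply, h2, G2B3, G2A4 h]
    simp
  · -- f3 (A 2)
    have h2 : sa * altWord sa sb 2 = altWord sb sa 1 := hsaA 1
    rw [hf3def, stepFun_apply, h2, G2A2, G2B1,
      Ud_succ φ sa sb ya yb 2, Ud_two φ sb sa yb ya]
    simp only [map_neg]
    ring
  · -- f3 (B 2)
    have h2 : sa * altWord sb sa 2 = altWord sa sb 3 := (habA 2).symm
    rw [hf3def, stepFun_apply, h2, G2B2, G2A3, Ud_two φ sb sa yb ya, map_zero]
    ring
  · -- f3 (A 1)
    have h2 : sa * altWord sa sb 1 = (1 : W) := by rw [hA1, hsa]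
    rw [hf3def, stepFun_apply, h2, G2A1, G2one,
      Ud_one φ sa sb ya yb, Sd_one φ sa sb (ya * yb)]
    simp only [map_mul]
    ring
  · -- f3 (B 1)
    have h2 : sa * altWord sb sa 1 = altWord sa sb 2 := (habA 1).symm
    rw [hf3def, stepFun_apply, h2, G2B1, G2A2, Ud_two φ sb sa yb ya]
    simp only [map_zero]
    ring
  · -- f3 (A 0)
    have h2 : sa * altWord sa sb 0 = altWord sa sb 1 := by rw [hA0, mul_one, hA1]
    rw [hf3def, stepFun_apply, h2, hA0, G2one, G2A1,
      Ud_one φ sa sb ya yb, Sd_one φ sa sb (ya * yb)]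
    simp only [map_neg, map_mul]
    ring
  · -- f3 (B 0)
    have h2 : sa * altWord sb sa 0 = altWord sa sb 1 := by rw [hB0, mul_one, hA1]
    rw [hf3def, stepFun_apply, h2, hB0, G2one, G2A1,
      Ud_zero φ sb sa yb ya, Sd_zero φ sb sa (ya * yb)]
    simp only [map_neg, map_mul]
    ring
section Generic2

variable {Q A W : Type*} [CommRing Q] [Ring A] [Group W] [Fintype W] [DecidableEq W]

lemma gstep (φ : W →* RingAut Q) (ι : Q →+* A) (δ : W →* A)
    (hcomm : ∀ (w : W) (q : Q), δ w * ι q = ι (φ w q) * δ w)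
    (sa : W) (hsa : sa * sa = 1)
    (a b : ℕ → W) (hab : ∀ j, a (j + 1) = sa * b j) (ha0 : a 0 = 1) (hb0 : b 0 = 1)
    (ya yb : Q) (Ua Ub Sa Sb : ℕ → Q)
    (hI1 : ∀ t, Ua (t + 1) = ya * φ sa (Ub t))
    (hI2 : ∀ t, Sa (t + 1) = ya * yb + φ sa (Sb t))
    (hI3 : ∀ t, φ sa (Ua (t + 1)) = φ sa ya * Ub t)
    (k : ℕ) (g : W → Q) (ε : Q) (hε : φ sa ε = ε)
    (X : A) (hX : X = ∑ w : W, ι (g w) * δ w)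
    (hsupp : ∀ w, (∀ j ≤ k + 3, w ≠ a j ∧ w ≠ b j) → g w = 0)
    (hne1 : ∀ j ≤ k + 3, a (k + 4) ≠ a j ∧ a (k + 4) ≠ b j)
    (hga : g (a (k + 3)) = 0)
    (hg1 : g (b (k + 3)) = ε * Ub (k + 3))
    (hg3 : g (b (k + 2)) = -(ε * Ub (k + 3)))
    (hg4 : g (a (k + 2)) = -(ε * (yb * Ua (k + 2))))
    (hg5 : g (b (k + 1)) = ε * (Ub (k + 1) * Sb (k + 1)))
    (hg6 : g (a (k + 1)) = ε * (yb * Ua (k + 2)))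
    (hg7 : g (b k) = -(ε * (Ub (k + 1) * Sb (k + 1)))) :
    ∃ f : W → Q,
      (ι ya * (1 - δ sa)) * X = (∑ w : W, ι (f w) * δ w) ∧
      (∀ w, (∀ j ≤ k + 4, w ≠ a j ∧ w ≠ b j) → f w = 0) ∧
      f (a (k + 4)) = -(ε * Ua (k + 4)) ∧
      ((∀ j ≤ k + 3, b (k + 4) ≠ a j ∧ b (k + 4) ≠ b j) →
        (∀ j ≤ k + 3, a (k + 5) ≠ a j ∧ a (k + 5) ≠ b j) → f (b (k + 4)) = 0) ∧
      f (a (k + 3)) = ε * Ua (k + 4) ∧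
      f (b (k + 3)) = ε * (ya * Ub (k + 3)) ∧
      f (a (k + 2)) = -(ε * (Ua (k + 2) * Sa (k + 2))) ∧
      f (b (k + 2)) = -(ε * (ya * Ub (k + 3))) ∧
      f (a (k + 1)) = ε * (Ua (k + 2) * Sa (k + 2)) ∧
      f (b (k + 1)) = ε * (ya * Ub (k + 1) * (Sb (k + 1) + φ sa (ya * yb))) := by
  have hsab : ∀ j, sa * a (j + 1) = b j := fun j => by
    rw [hab, ← mul_assoc, hsa, one_mul]
  have ha1 : a 1 = sa := by rw [hab 0, hb0, mul_one]
  have hI1' : Ua (k + 4) = ya * φ sa (Ub (k + 3)) := hI1 (k + 3)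
  have hI1'' : Ua (k + 2) = ya * φ sa (Ub (k + 1)) := hI1 (k + 1)
  have hI2' : Sa (k + 2) = ya * yb + φ sa (Sb (k + 1)) := hI2 (k + 1)
  have hI3' : φ sa (Ua (k + 2)) = φ sa ya * Ub (k + 1) := hI3 (k + 1)
  have e4 : sa * a (k + 4) = b (k + 3) := hsab (k + 3)
  have e3 : sa * a (k + 3) = b (k + 2) := hsab (k + 2)
  have e2 : sa * a (k + 2) = b (k + 1) := hsab (k + 1)
  have e1 : sa * a (k + 1) = b k := hsab k
  have e4' : sa * b (k + 4) = a (k + 5) := (hab (k + 4)).symm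
  have e3' : sa * b (k + 3) = a (k + 4) := (hab (k + 3)).symm
  have e2' : sa * b (k + 2) = a (k + 3) := (hab (k + 2)).symm
  have e1' : sa * b (k + 1) = a (k + 2) := (hab (k + 1)).symm
  have hga4 : g (a (k + 4)) = 0 := hsupp _ hne1
  refine ⟨fun w => ya * (g w - φ sa (g (sa * w))), ?_, ?_, ?_, ?_, ?_, ?_, ?_, ?_, ?_, ?_⟩
  · rw [hX]; exact mulStep φ ι δ hcomm sa hsa ya g
  · -- support
    intro w hw
    have hg0 : g w = 0 := hsupp w fun j hj => hw j (by omega)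
    have hg0' : g (sa * w) = 0 := by
      refine hsupp _ fun j hj => ⟨?_, ?_⟩
      · intro h
        have hww : w = sa * a j := by rw [← h, ← mul_assoc, hsa, one_mul]
        match j, hj with
        | 0, _ =>
          rw [ha0, mul_one] at hww
          exact (hw 1 (by omega)).1 (by rw [hww, ha1])
        | (j' + 1), hj =>
          rw [hsab j'] at hww
          exact (hw j' (by omega)).2 hww
      · intro h
        have hww : w = sa * b j := by rw [← h, ← mul_assoc, hsa, one_mul]
        rw [← hab j] at hww
        exact (hw (j + 1) (by omega)).1 hww
    simp [hg0, hg0']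
  · beta_reduce; rw [e4, hga4, hg1, hI1', map_mul, hε]; ring
  · intro hne2 hne3
    have h1 : g (b (k + 4)) = 0 := hsupp _ hne2
    have h2 : g (a (k + 5)) = 0 := hsupp _ hne3
    beta_reduce; rw [e4', h1, h2]; simp
  · beta_reduce; rw [e3, hga, hg3, hI1', map_neg, map_mul, hε]; ring
  · beta_reduce; rw [e3', hg1, hga4, map_zero]; ring
  · beta_reduce; rw [e2, hg4, hg5, map_mul, map_mul, hε, hI1'', hI2']; ring
  · beta_reduce; rw [e2', hg3, hga, map_zero]; ring
  · beta_reduce; rw [e1, hg6, hg7, map_neg, map_mul, map_mul, hε, hI1'', hI2']; ring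
  · beta_reduce; rw [e1', hg5, hg4, map_neg, map_mul, map_mul, hε, hI3', map_mul]; ring

end Generic2

section Invariant

variable {Q A W : Type*} [CommRing Q] [Ring A] [Group W] [Fintype W] [DecidableEq W]

lemma invariant (φ : W →* RingAut Q) (ι : Q →+* A) (δ : W →* A)
    (hcomm : ∀ (w : W) (q : Q), δ w * ι q = ι (φ w q) * δ w)
    (sa sb : W) (hsa : sa * sa = 1) (hsb : sb * sb = 1)
    (m : ℕ)
    (hdist : ∀ i j : ℕ, j < i → i ≤ m →
      (altWord sa sb i ≠ altWord sa sb j ∧ altWord sa sb i ≠ altWord sb sa j ∧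
       altWord sb sa i ≠ altWord sa sb j ∧ altWord sb sa i ≠ altWord sb sa j))
    (ya yb : Q)
    (hx1 : altWord sb sa 4 ≠ 1) (hx2 : altWord sa sb 4 ≠ 1)
    (hx3 : altWord sa sb 5 ≠ 1) (hx4 : altWord sb sa 5 ≠ 1)
    (hx5 : 3 < m → altWord sa sb 6 ≠ 1) (hx6 : 3 < m → altWord sb sa 6 ≠ 1) :
    ∀ k : ℕ, k + 3 ≤ m →
    ∃ f g : W → Q,
      altWord (ι ya * (1 - δ sa)) (ι yb * (1 - δ sb)) (k + 3) = (∑ w : W, ι (f w) * δ w) ∧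
      altWord (ι yb * (1 - δ sb)) (ι ya * (1 - δ sa)) (k + 3) = (∑ w : W, ι (g w) * δ w) ∧
      (∀ w, (∀ j ≤ k + 3, w ≠ altWord sa sb j ∧ w ≠ altWord sb sa j) → f w = 0) ∧
      (∀ w, (∀ j ≤ k + 3, w ≠ altWord sa sb j ∧ w ≠ altWord sb sa j) → g w = 0) ∧
      f (altWord sa sb (k + 3)) = (-1 : Q) ^ (k + 3) * Ud φ sa sb ya yb (k + 3) ∧
      (k + 3 < m → f (altWord sb sa (k + 3)) = 0) ∧
      f (altWord sa sb (k + 2)) = -((-1 : Q) ^ (k + 3) * Ud φ sa sb ya yb (k + 3)) ∧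
      f (altWord sb sa (k + 2)) =
        -((-1 : Q) ^ (k + 3) * (ya * Ud φ sb sa yb ya (k + 2))) ∧
      f (altWord sa sb (k + 1)) =
        (-1 : Q) ^ (k + 3) * (Ud φ sa sb ya yb (k + 1) * Sd φ sa sb (ya * yb) (k + 1)) ∧
      f (altWord sb sa (k + 1)) =
        (-1 : Q) ^ (k + 3) * (ya * Ud φ sb sa yb ya (k + 2)) ∧
      f (altWord sa sb k) =
        -((-1 : Q) ^ (k + 3) * (Ud φ sa sb ya yb (k + 1) * Sd φ sa sb (ya * yb) (k + 1))) ∧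
      f (altWord sb sa k) =
        -((-1 : Q) ^ (k + 3) * (ya * Ud φ sb sa yb ya k *
          (Sd φ sb sa (ya * yb) k + φ sa (ya * yb)))) ∧
      g (altWord sb sa (k + 3)) = (-1 : Q) ^ (k + 3) * Ud φ sb sa yb ya (k + 3) ∧
      (k + 3 < m → g (altWord sa sb (k + 3)) = 0) ∧
      g (altWord sb sa (k + 2)) = -((-1 : Q) ^ (k + 3) * Ud φ sb sa yb ya (k + 3)) ∧
      g (altWord sa sb (k + 2)) =
        -((-1 : Q) ^ (k + 3) * (yb * Ud φ sa sb ya yb (k + 2))) ∧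
      g (altWord sb sa (k + 1)) =
        (-1 : Q) ^ (k + 3) * (Ud φ sb sa yb ya (k + 1) * Sd φ sb sa (ya * yb) (k + 1)) ∧
      g (altWord sa sb (k + 1)) =
        (-1 : Q) ^ (k + 3) * (yb * Ud φ sa sb ya yb (k + 2)) ∧
      g (altWord sb sa k) =
        -((-1 : Q) ^ (k + 3) * (Ud φ sb sa yb ya (k + 1) * Sd φ sb sa (ya * yb) (k + 1))) ∧
      g (altWord sa sb k) =
        -((-1 : Q) ^ (k + 3) * (yb * Ud φ sa sb ya yb k *
          (Sd φ sa sb (ya * yb) k + φ sb (ya * yb)))) := by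
  have hdist' : ∀ i j : ℕ, j < i → i ≤ m →
      (altWord sb sa i ≠ altWord sb sa j ∧ altWord sb sa i ≠ altWord sa sb j ∧
       altWord sa sb i ≠ altWord sb sa j ∧ altWord sa sb i ≠ altWord sa sb j) :=
    fun i j h1 h2 => ⟨(hdist i j h1 h2).2.2.2, (hdist i j h1 h2).2.2.1,
      (hdist i j h1 h2).2.1, (hdist i j h1 h2).1⟩
  intro k
  induction k with
  | zero =>
    intro hm
    obtain ⟨f, hf⟩ := base3 φ ι δ hcomm sa sb hsa hsb m hm hdist ya yb hx1 hx3 hx4 hx5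
    obtain ⟨g, hg⟩ := base3 φ ι δ hcomm sb sa hsb hsa m hm hdist' yb ya hx2 hx4 hx3 hx6
    obtain ⟨hgE, hgS, hg1, hg2, hg3, hg4, hg5, hg6, hg7, hg8⟩ := hg
    rw [mul_comm yb ya] at hg5 hg7 hg8
    exact ⟨f, g, hf.1, hgE, hf.2.1, fun w hw => hgS w (fun j hj => ⟨(hw j hj).2, (hw j hj).1⟩),
      hf.2.2.1, hf.2.2.2.1, hf.2.2.2.2.1, hf.2.2.2.2.2.1, hf.2.2.2.2.2.2.1,
      hf.2.2.2.2.2.2.2.1, hf.2.2.2.2.2.2.2.2.1, hf.2.2.2.2.2.2.2.2.2,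
      hg1, hg2, hg3, hg4, hg5, hg6, hg7, hg8⟩
  | succ k ih =>
    intro hm
    simp only [show k + 1 + 3 = k + 4 from rfl, show k + 1 + 2 = k + 3 from rfl,
      show k + 1 + 1 = k + 2 from rfl]
    obtain ⟨f, g, hEf, hEg, hSf, hSg, f1, f2, f3, f4, f5, f6, f7, f8,
      g1, g2, g3, g4, g5, g6, g7, g8⟩ := ih (by omega)
    have hkm : k + 3 < m := by omega
    have hsign : ((-1 : Q) ^ (k + 4)) = -((-1 : Q) ^ (k + 3)) := by
      rw [pow_succ]; ring
    have hεa : φ sa ((-1 : Q) ^ (k + 3)) = (-1 : Q) ^ (k + 3) := by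
      rw [map_pow, map_neg, map_one]
    have hεb : φ sb ((-1 : Q) ^ (k + 3)) = (-1 : Q) ^ (k + 3) := by
      rw [map_pow, map_neg, map_one]
    obtain ⟨f', hf'E, hf'S, hf'1, hf'2, hf'3, hf'4, hf'5, hf'6, hf'7, hf'8⟩ :=
      gstep φ ι δ hcomm sa hsa
        (altWord sa sb) (altWord sb sa) (fun j => rfl) rfl rfl
        ya yb (Ud φ sa sb ya yb) (Ud φ sb sa yb ya)
        (Sd φ sa sb (ya * yb)) (Sd φ sb sa (ya * yb))
        (Ud_succ φ sa sb ya yb) (Sd_succ φ sa sb (ya * yb)) (Ud_apply φ sa sb ya yb hsa)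
        k g ((-1 : Q) ^ (k + 3)) hεa
        _ hEg
        hSg
        (fun j hj => ⟨(hdist (k + 4) j (by omega) (by omega)).1,
          (hdist (k + 4) j (by omega) (by omega)).2.1⟩)
        (g2 hkm) g1 g3 g4 g5 g6 g7
    obtain ⟨g', hg'E, hg'S, hg'1, hg'2, hg'3, hg'4, hg'5, hg'6, hg'7, hg'8⟩ :=
      gstep φ ι δ hcomm sb hsb
        (altWord sb sa) (altWord sa sb) (fun j => rfl) rfl rfl
        yb ya (Ud φ sb sa yb ya) (Ud φ sa sb ya yb)
        (Sd φ sb sa (ya * yb)) (Sd φ sa sb (ya * yb))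
        (Ud_succ φ sb sa yb ya)
        (fun t => by rw [mul_comm yb ya]; exact Sd_succ φ sb sa (ya * yb) t)
        (Ud_apply φ sb sa yb ya hsb)
        k f ((-1 : Q) ^ (k + 3)) hεb
        _ hEf
        (fun w hw => hSf w (fun j hj => ⟨(hw j hj).2, (hw j hj).1⟩))
        (fun j hj => ⟨(hdist (k + 4) j (by omega) (by omega)).2.2.2,
          (hdist (k + 4) j (by omega) (by omega)).2.2.1⟩)
        (f2 hkm) f1 f3 f4 f5 f6 f7
    refine ⟨f', g', hf'E, hg'E, hf'S,
      (fun w hw => hg'S w (fun j hj => ⟨(hw j hj).2, (hw j hj).1⟩)),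
      ?_, ?_, ?_, ?_, ?_, ?_, ?_, ?_, ?_, ?_, ?_, ?_, ?_, ?_, ?_, ?_⟩
    · rw [hsign]; exact hf'1.trans (by ring)
    · intro h
      exact hf'2
        (fun j hj => ⟨(hdist (k + 4) j (by omega) (by omega)).2.2.1,
          (hdist (k + 4) j (by omega) (by omega)).2.2.2⟩)
        (fun j hj => ⟨(hdist (k + 5) j (by omega) (by omega)).1,
          (hdist (k + 5) j (by omega) (by omega)).2.1⟩)
    · rw [hsign]; exact hf'3.trans (by ring)
    · rw [hsign]; exact hf'4.trans (by ring)
    · rw [hsign]; exact hf'5.trans (by ring)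
    · rw [hsign]; exact hf'6.trans (by ring)
    · rw [hsign]; exact hf'7.trans (by ring)
    · rw [hsign]; exact hf'8.trans (by ring)
    · rw [hsign]; exact hg'1.trans (by ring)
    · intro h
      exact hg'2
        (fun j hj => ⟨(hdist (k + 4) j (by omega) (by omega)).2.1,
          (hdist (k + 4) j (by omega) (by omega)).1⟩)
        (fun j hj => ⟨(hdist (k + 5) j (by omega) (by omega)).2.2.2,
          (hdist (k + 5) j (by omega) (by omega)).2.2.1⟩)
    · rw [hsign]; exact hg'3.trans (by ring)
    · rw [hsign]; exact hg'4.trans (by ring)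
    · rw [hsign]; exact hg'5.trans (by ring)
    · rw [hsign]; exact hg'6.trans (by ring)
    · rw [hsign]; exact hg'7.trans (by ring)
    · rw [hsign, show φ sb (ya * yb) = φ sb (yb * ya) from by rw [mul_comm]]
      exact hg'8.trans (by ring)

end Invariant
lemma altWord_add_two {M : Type*} [Monoid M] (a b : M) (n : ℕ) :
    altWord a b (n + 2) = a * (b * altWord a b n) := rfl

lemma altWord_closed (m : ℕ) : ∀ k : ℕ,
    altWord (sr 0 : DihedralGroup m) (sr 1) (2 * k) = r (k : ZMod m) ∧
    altWord (sr 1 : DihedralGroup m) (sr 0) (2 * k) = r (-(k : ZMod m)) ∧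
    altWord (sr 0 : DihedralGroup m) (sr 1) (2 * k + 1) = sr (-(k : ZMod m)) ∧
    altWord (sr 1 : DihedralGroup m) (sr 0) (2 * k + 1) = sr (1 + (k : ZMod m)) := by
  intro k
  induction k with
  | zero =>
    refine ⟨?_, ?_, ?_, ?_⟩ <;> simp [altWord]
  | succ k ih =>
    obtain ⟨h1, h2, h3, h4⟩ := ih
    have e1 : 2 * (k + 1) = 2 * k + 2 := by ring
    have e2 : 2 * (k + 1) + 1 = 2 * k + 1 + 2 := by ring
    refine ⟨?_, ?_, ?_, ?_⟩
    · rw [e1, altWord_add_two, h1]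
      push_cast
      simp [sub_eq_add_neg]
      ring_nf
    · rw [e1, altWord_add_two, h2]
      push_cast
      simp [sub_eq_add_neg]
      ring_nf
    · rw [e2, altWord_add_two, h3]
      push_cast
      simp [sub_eq_add_neg]
      ring_nf
    · rw [e2, altWord_add_two, h4]
      push_cast
      simp [sub_eq_add_neg]
      ring_nf

lemma dihedral_distinct (m : ℕ) [NeZero m] :
    ∀ i j : ℕ, j < i → i ≤ m →
    (altWord (sr 0 : DihedralGroup m) (sr 1) i ≠ altWord (sr 0) (sr 1) j ∧
     altWord (sr 0 : DihedralGroup m) (sr 1) i ≠ altWord (sr 1) (sr 0) j ∧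
     altWord (sr 1 : DihedralGroup m) (sr 0) i ≠ altWord (sr 0) (sr 1) j ∧
     altWord (sr 1 : DihedralGroup m) (sr 0) i ≠ altWord (sr 1) (sr 0) j) := by
  have hm : 0 < m := Nat.pos_of_ne_zero (NeZero.ne m)
  have inj : ∀ u v : ℕ, u < m → v < m → ((u : ZMod m) = (v : ZMod m)) → u = v := by
    intro u v hu hv h
    have := congrArg ZMod.val h
    rwa [ZMod.val_natCast_of_lt hu, ZMod.val_natCast_of_lt hv] at this
  intro i j hji him
  rcases Nat.even_or_odd i with hi | hi
  · obtain ⟨k, hk⟩ := hi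
    have hk2 : i = 2 * k := by omega
    subst hk2
    rcases Nat.even_or_odd j with hj | hj
    · obtain ⟨k', hk'⟩ := hj
      have hk2' : j = 2 * k' := by omega
      subst hk2'
      obtain ⟨a1, _, _, _⟩ := altWord_closed m k
      obtain ⟨a2, b2, _, _⟩ := altWord_closed m k'
      obtain ⟨_, b1, _, _⟩ := altWord_closed m k
      rw [a1, b1, a2, b2]
      have hkk : k' < k := by omega
      have hkm : k < m := by omega
      have haa : (k : ZMod m) ≠ (k' : ZMod m) := by
        intro h; exact absurd (inj k k' hkm (by omega) h) (by omega)
      have hab : (k : ZMod m) ≠ -(k' : ZMod m) := by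
        intro h
        have : ((k + k' : ℕ) : ZMod m) = ((0 : ℕ) : ZMod m) := by push_cast; rw [h]; ring
        have := inj _ _ (by omega) hm this
        omega
      refine ⟨?_, ?_, ?_, ?_⟩ <;> simp only [r.injEq, ne_eq]
      · exact haa
      · exact hab
      · intro h; exact hab (by linear_combination -h)
      · intro h; exact haa (by linear_combination -h)
    · obtain ⟨k', hk'⟩ := hj
      subst hk'
      obtain ⟨a1, _, _, _⟩ := altWord_closed m k
      obtain ⟨_, b1, _, _⟩ := altWord_closed m k
      obtain ⟨_, _, a2, b2⟩ := altWord_closed m k'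
      rw [a1, b1, a2, b2]
      refine ⟨?_, ?_, ?_, ?_⟩ <;> simp
  · obtain ⟨k, hk⟩ := hi
    subst hk
    rcases Nat.even_or_odd j with hj | hj
    · obtain ⟨k', hk'⟩ := hj
      have hk2' : j = 2 * k' := by omega
      subst hk2'
      obtain ⟨_, _, a1, b1⟩ := altWord_closed m k
      obtain ⟨a2, b2, _, _⟩ := altWord_closed m k'
      rw [a1, b1, a2, b2]
      refine ⟨?_, ?_, ?_, ?_⟩ <;> simp
    · obtain ⟨k', hk'⟩ := hj
      subst hk'
      obtain ⟨_, _, a1, b1⟩ := altWord_closed m k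
      obtain ⟨_, _, a2, b2⟩ := altWord_closed m k'
      rw [a1, b1, a2, b2]
      have hkk : k' < k := by omega
      have hkm : k < m := by omega
      have haa : (k : ZMod m) ≠ (k' : ZMod m) := by
        intro h; exact absurd (inj k k' hkm (by omega) h) (by omega)
      have hab : ((k + k' + 1 : ℕ) : ZMod m) ≠ ((0 : ℕ) : ZMod m) := by
        intro h
        have := inj _ _ (by omega) hm h
        omega
      refine ⟨?_, ?_, ?_, ?_⟩ <;> simp only [sr.injEq, ne_eq]
      · intro h; exact haa (by linear_combination -h)
      · intro h; apply hab; push_cast; linear_combination -h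
      · intro h; apply hab; push_cast; linear_combination h
      · intro h; exact haa (by linear_combination h)

/-!
STATEMENT 5: For the dihedral group `W = I₂(m)` (`m ≥ 3`), when `X_{α…}^{(m)}` is
expanded in the `Q`-basis `{δ_w : w ∈ W}` of `Q_W`, the coefficient of
`δ_{β…}^{(m−3)}` equals `−y_α · υ_β^{(3)} · (S_β^{(0,m−3)}(y_α y_β) + s_α(y_α y_β))`
if `m` is even, and `y_α · υ_β^{(3)} · (S_β^{(0,m−3)}(y_α y_β) + s_α(y_α y_β))` if
`m` is odd.  By symmetry (exchanging the roles of `α` and `β`), the coefficient of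
`δ_{α…}^{(m−3)}` in the expansion of `X_{β…}^{(m)}` is the corresponding expression
with `α` and `β` interchanged.

Here `υ_β^{(3)} = ∏_{j=0}^{m−4} s_{β…}^{(j)}(y_{ω_{j+1}})` with `ω_j = α` for `j`
even and `ω_j = β` for `j` odd, and `S_β^{(0,m−3)} = Σ_{k=0}^{m−3} s_{β…}^{(k)}`.

Setting: `Q` is the localized formal root algebra of the root system of `I₂(m)`
over an integral domain `R`, `φ` the action of `W = DihedralGroup m` on `Q` with
simple reflections `s_α = φ (sr 0)`, `s_β = φ (sr 1)`, `A = Q_W` the localized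
twisted formal root algebra, free as a left `Q`-module with basis `{δ w}` (`hfree`),
`y_α, y_β` the inverses in `Q` of the simple-root classes `x_α, x_β ∈ S`,
`X_α = ι y_α (1 − δ_α)`, `X_β = ι y_β (1 − δ_β)`, and `c, c'` the coordinates of
`X_{α…}^{(m)}`, resp. `X_{β…}^{(m)}`, in the basis `{δ w}`.
-/
theorem coefficient_of_delta_m_sub_three
    (m : ℕ) [NeZero m] (hm : 3 ≤ m)
    {R S Q A : Type*} [CommRing R] [IsDomain R] [CommRing S] [Algebra R S]
    [CommRing Q] [Algebra S Q] [Algebra R Q] [IsScalarTower R S Q] [Ring A]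
    (φ : DihedralGroup m →* RingAut Q)
    (ι : Q →+* A) (hι : Function.Injective ι)
    (δ : DihedralGroup m →* A)
    (hcomm : ∀ (w : DihedralGroup m) (q : Q), δ w * ι q = ι (φ w q) * δ w)
    (hfree : ∀ cf : DihedralGroup m → Q,
      (∑ w : DihedralGroup m, ι (cf w) * δ w) = 0 → ∀ w, cf w = 0)
    (xα xβ : S) (yα yβ : Q)
    (hxα : algebraMap S Q xα * yα = 1) (hxβ : algebraMap S Q xβ * yβ = 1)
    (Xα Xβ : A)
    (hXα : Xα = ι yα * (1 - δ (sr 0))) (hXβ : Xβ = ι yβ * (1 - δ (sr 1)))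
    (c c' : DihedralGroup m → Q)
    (hc : altWord Xα Xβ m = ∑ w : DihedralGroup m, ι (c w) * δ w)
    (hc' : altWord Xβ Xα m = ∑ w : DihedralGroup m, ι (c' w) * δ w) :
    ((Even m → c (altWord (sr 1) (sr 0) (m - 3)) =
        -(yα * (∏ j ∈ range (m - 3),
            altWord (φ (sr 1)) (φ (sr 0)) j (if Even j then yβ else yα)) *
          ((∑ k ∈ Icc 0 (m - 3), altWord (φ (sr 1)) (φ (sr 0)) k (yα * yβ)) +
            φ (sr 0) (yα * yβ)))) ∧
      (Odd m → c (altWord (sr 1) (sr 0) (m - 3)) =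
        yα * (∏ j ∈ range (m - 3),
            altWord (φ (sr 1)) (φ (sr 0)) j (if Even j then yβ else yα)) *
          ((∑ k ∈ Icc 0 (m - 3), altWord (φ (sr 1)) (φ (sr 0)) k (yα * yβ)) +
            φ (sr 0) (yα * yβ)))) ∧
    ((Even m → c' (altWord (sr 0) (sr 1) (m - 3)) =
        -(yβ * (∏ j ∈ range (m - 3),
            altWord (φ (sr 0)) (φ (sr 1)) j (if Even j then yα else yβ)) *
          ((∑ k ∈ Icc 0 (m - 3), altWord (φ (sr 0)) (φ (sr 1)) k (yβ * yα)) +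
            φ (sr 1) (yβ * yα)))) ∧
      (Odd m → c' (altWord (sr 0) (sr 1) (m - 3)) =
        yβ * (∏ j ∈ range (m - 3),
            altWord (φ (sr 0)) (φ (sr 1)) j (if Even j then yα else yβ)) *
          ((∑ k ∈ Icc 0 (m - 3), altWord (φ (sr 0)) (φ (sr 1)) k (yβ * yα)) +
            φ (sr 1) (yβ * yα)))) := by
  have hm0 : 0 < m := by omega
  have hsa : (sr 0 : DihedralGroup m) * sr 0 = 1 := by
    rw [sr_mul_sr, sub_self, one_def]
  have hsb : (sr 1 : DihedralGroup m) * sr 1 = 1 := by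
    rw [sr_mul_sr, sub_self, one_def]
  -- the small non-identity facts
  have hdvd : ∀ d : ℕ, 0 < d → d < m → ((d : ℕ) : ZMod m) ≠ 0 := by
    intro d hd hdm h
    rw [ZMod.natCast_eq_zero_iff] at h
    have := Nat.le_of_dvd hd h
    omega
  have hB4 : altWord (sr 1 : DihedralGroup m) (sr 0) 4 = r (-((2 : ℕ) : ZMod m)) :=
    (altWord_closed m 2).2.1
  have hA4 : altWord (sr 0 : DihedralGroup m) (sr 1) 4 = r ((2 : ℕ) : ZMod m) :=
    (altWord_closed m 2).1
  have hA5 : altWord (sr 0 : DihedralGroup m) (sr 1) 5 = sr (-((2 : ℕ) : ZMod m)) :=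
    (altWord_closed m 2).2.2.1
  have hB5 : altWord (sr 1 : DihedralGroup m) (sr 0) 5 = sr (1 + ((2 : ℕ) : ZMod m)) :=
    (altWord_closed m 2).2.2.2
  have hA6 : altWord (sr 0 : DihedralGroup m) (sr 1) 6 = r ((3 : ℕ) : ZMod m) :=
    (altWord_closed m 3).1
  have hB6 : altWord (sr 1 : DihedralGroup m) (sr 0) 6 = r (-((3 : ℕ) : ZMod m)) :=
    (altWord_closed m 3).2.1
  have hx1 : altWord (sr 1 : DihedralGroup m) (sr 0) 4 ≠ 1 := by
    rw [hB4, one_def]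
    intro h
    rw [r.injEq, neg_eq_zero] at h
    exact hdvd 2 (by omega) (by omega) h
  have hx2 : altWord (sr 0 : DihedralGroup m) (sr 1) 4 ≠ 1 := by
    rw [hA4, one_def]
    intro h
    rw [r.injEq] at h
    exact hdvd 2 (by omega) (by omega) h
  have hx3 : altWord (sr 0 : DihedralGroup m) (sr 1) 5 ≠ 1 := by
    rw [hA5, one_def]; intro h; cases h
  have hx4 : altWord (sr 1 : DihedralGroup m) (sr 0) 5 ≠ 1 := by
    rw [hB5, one_def]; intro h; cases h
  have hx5 : 3 < m → altWord (sr 0 : DihedralGroup m) (sr 1) 6 ≠ 1 := by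
    intro h3
    rw [hA6, one_def]
    intro h
    rw [r.injEq] at h
    exact hdvd 3 (by omega) (by omega) h
  have hx6 : 3 < m → altWord (sr 1 : DihedralGroup m) (sr 0) 6 ≠ 1 := by
    intro h3
    rw [hB6, one_def]
    intro h
    rw [r.injEq, neg_eq_zero] at h
    exact hdvd 3 (by omega) (by omega) h
  obtain ⟨f, g, hEf, hEg, hSf, hSg, f1, f2, f3, f4, f5, f6, f7, f8,
      g1, g2, g3, g4, g5, g6, g7, g8⟩ :=
    invariant φ ι δ hcomm (sr 0) (sr 1) hsa hsb m (dihedral_distinct m) yα yβ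
      hx1 hx2 hx3 hx4 hx5 hx6 (m - 3) (by omega)
  have hm3 : m - 3 + 3 = m := by omega
  rw [hm3] at hEf hEg f8 g8
  rw [hXα, hXβ] at hc hc'
  -- uniqueness of the coefficients
  have huniq : ∀ (u v : DihedralGroup m → Q),
      (∑ w : DihedralGroup m, ι (u w) * δ w) = (∑ w : DihedralGroup m, ι (v w) * δ w) →
      ∀ w, u w = v w := by
    intro u v huv w
    have hsum : ∑ w : DihedralGroup m, ι (u w - v w) * δ w = 0 := by
      have : ∑ w : DihedralGroup m, ι (u w - v w) * δ w =
          (∑ w : DihedralGroup m, ι (u w) * δ w) - ∑ w : DihedralGroup m, ι (v w) * δ w := by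
        rw [← Finset.sum_sub_distrib]
        exact Finset.sum_congr rfl fun w _ => by rw [map_sub, sub_mul]
      rw [this, huv, sub_self]
    exact sub_eq_zero.mp (hfree _ hsum w)
  have hcf : ∀ w, c w = f w := huniq c f (by rw [← hc, ← hEf])
  have hcg : ∀ w, c' w = g w := huniq c' g (by rw [← hc', ← hEg])
  -- conversion of the products and sums
  have hIcc : Icc 0 (m - 3) = range (m - 3 + 1) := by
    rw [← Finset.Ico_add_one_right_eq_Icc, Nat.Ico_zero_eq_range]
  have hUB : (∏ j ∈ range (m - 3),
      altWord (φ (sr 1)) (φ (sr 0)) j (if Even j then yβ else yα)) =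
      Ud φ (sr 1) (sr 0) yβ yα (m - 3) := by
    unfold Ud
    exact Finset.prod_congr rfl fun j _ => by rw [altWord_map φ j (sr 1) (sr 0)]
  have hUA : (∏ j ∈ range (m - 3),
      altWord (φ (sr 0)) (φ (sr 1)) j (if Even j then yα else yβ)) =
      Ud φ (sr 0) (sr 1) yα yβ (m - 3) := by
    unfold Ud
    exact Finset.prod_congr rfl fun j _ => by rw [altWord_map φ j (sr 0) (sr 1)]
  have hSB : (∑ k ∈ Icc 0 (m - 3), altWord (φ (sr 1)) (φ (sr 0)) k (yα * yβ)) =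
      Sd φ (sr 1) (sr 0) (yα * yβ) (m - 3) := by
    rw [hIcc]
    unfold Sd
    exact Finset.sum_congr rfl fun k _ => by rw [altWord_map φ k (sr 1) (sr 0)]
  have hSA : (∑ k ∈ Icc 0 (m - 3), altWord (φ (sr 0)) (φ (sr 1)) k (yβ * yα)) =
      Sd φ (sr 0) (sr 1) (yα * yβ) (m - 3) := by
    rw [hIcc]
    unfold Sd
    exact Finset.sum_congr rfl fun k _ => by
      rw [altWord_map φ k (sr 0) (sr 1), mul_comm yβ yα]
  refine ⟨⟨?_, ?_⟩, ?_, ?_⟩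
  · intro hEv
    rw [hcf, f8, hUB, hSB, Even.neg_one_pow hEv]
    ring
  · intro hOdd
    rw [hcf, f8, hUB, hSB, Odd.neg_one_pow hOdd]
    ring
  · intro hEv
    rw [hcg, g8, hUA, hSA, mul_comm yβ yα, Even.neg_one_pow hEv]
    ring
  · intro hOdd
    rw [hcg, g8, hUA, hSA, mul_comm yβ yα, Odd.neg_one_pow hOdd]
    ring
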